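/- arXiv:2506.00921 — 3 statements merged into one kernel-verified Lean document; each statement's English description precedes it below -/
import Mathlib

section
/- For Hermitian matrices A and B of order n and indices i, j ≥ 1 with i + j - 1 ≤ n, the (i+j-1)-th largest eigenvalue of A + B is at most the i-th largest eigenvalue of A plus the j-th largest eigenvalue of B. -/
open Matrix RCLike Submodule

section WeylAux

variable {n : ℕ} {M : Matrix (Fin n) (Fin n) ℂ}

local notation "⟪" x ", " y "⟫" => inner (𝕜 := ℂ) x y

private theorem weylAux.sort_eq_ofFn (f : Fin n → ℝ) :
    (Finset.univ.val.map f).sort (· ≤ ·) = List.ofFn (f ∘ Tuple.sort f) := by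
  apply List.Perm.eq_of_pairwise' (Multiset.pairwise_sort _ _)
    (List.pairwise_ofFn.2 fun _ _ h => (Tuple.monotone_sort f) h.le)
  rw [← Multiset.coe_eq_coe]
  rw [Multiset.sort_eq, ← List.map_ofFn, ← Multiset.map_coe, ← Fin.univ_val_map]
  congr 1
  have : (Finset.univ.map (Tuple.sort f).toEmbedding).val = Finset.univ.val :=
    congrArg Finset.val (Finset.map_univ_equiv _)
  simpa [Finset.map_val] using this.symm

private theorem weylAux.T_eigen (hM : M.IsHermitian) (p : Fin n) :
    toEuclideanLin M (hM.eigenvectorBasis p) = (hM.eigenvalues p : ℂ) • hM.eigenvectorBasis p := by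
  have := hM.mulVec_eigenvectorBasis p
  rw [toEuclideanLin_apply]
  ext q
  have := congrFun this q
  change (M *ᵥ _) q = _
  rw [this]
  simp only [Pi.smul_apply, PiLp.smul_apply, Complex.real_smul, smul_eq_mul]

private theorem weylAux.repr_toEuclideanLin (hM : M.IsHermitian)
    (x : EuclideanSpace ℂ (Fin n)) (p : Fin n) :
    hM.eigenvectorBasis.repr (toEuclideanLin M x) p
      = (hM.eigenvalues p : ℂ) * hM.eigenvectorBasis.repr x p := by
  rw [OrthonormalBasis.repr_apply_apply, OrthonormalBasis.repr_apply_apply]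
  rw [← (Matrix.isHermitian_iff_isSymmetric.1 hM) (hM.eigenvectorBasis p) x, weylAux.T_eigen hM p]
  rw [inner_smul_left]
  simp

private theorem weylAux.quad_eq_sum (hM : M.IsHermitian) (x : EuclideanSpace ℂ (Fin n)) :
    re ⟪x, toEuclideanLin M x⟫
      = ∑ p, hM.eigenvalues p * ‖hM.eigenvectorBasis.repr x p‖ ^ 2 := by
  rw [← hM.eigenvectorBasis.repr.inner_map_map x (toEuclideanLin M x)]
  rw [PiLp.inner_apply]
  rw [map_sum]
  congr 1; ext p
  rw [weylAux.repr_toEuclideanLin hM x p]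
  have : (starRingEnd ℂ) (hM.eigenvectorBasis.repr x p)
        * ((hM.eigenvalues p : ℂ) * hM.eigenvectorBasis.repr x p)
      = (hM.eigenvalues p : ℂ)
        * ((starRingEnd ℂ) (hM.eigenvectorBasis.repr x p) * hM.eigenvectorBasis.repr x p) := by
    ring
  rw [RCLike.inner_apply, mul_assoc, RCLike.mul_conj]
  simp [RCLike.ofReal_pow]
  left
  norm_cast

private theorem weylAux.norm_sq_eq_sum (b : OrthonormalBasis (Fin n) ℂ (EuclideanSpace ℂ (Fin n)))
    (x : EuclideanSpace ℂ (Fin n)) :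
    ‖x‖ ^ 2 = ∑ p, ‖b.repr x p‖ ^ 2 := by
  rw [← b.repr.norm_map x, EuclideanSpace.norm_eq]
  rw [Real.sq_sqrt (by positivity)]

private theorem weylAux.repr_eq_zero_of_mem_span
    (b : OrthonormalBasis (Fin n) ℂ (EuclideanSpace ℂ (Fin n)))
    (s : Finset (Fin n)) {x : EuclideanSpace ℂ (Fin n)}
    (hx : x ∈ span ℂ (b '' ↑s)) {p : Fin n} (hp : p ∉ s) :
    b.repr x p = 0 := by
  rw [OrthonormalBasis.repr_apply_apply]
  have : span ℂ (b '' ↑s) ≤ LinearMap.ker ((innerSL ℂ (b p)).toLinearMap) := by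
    rw [span_le]
    rintro v ⟨q, hq, rfl⟩
    simp only [SetLike.mem_coe, LinearMap.mem_ker, ContinuousLinearMap.coe_coe, innerSL_apply_apply]
    exact b.orthonormal.2 (fun h => hp (h ▸ hq))
  simpa using this hx

private theorem weylAux.finrank_span_basis
    (b : OrthonormalBasis (Fin n) ℂ (EuclideanSpace ℂ (Fin n))) (s : Finset (Fin n)) :
    Module.finrank ℂ (span ℂ (b '' ↑s)) = s.card := by
  have hli : LinearIndependent ℂ (fun q : {q // q ∈ s} => b q) := by
    have := b.toBasis.linearIndependent
    simp only [OrthonormalBasis.coe_toBasis] at this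
    exact this.comp _ Subtype.val_injective
  have : b '' ↑s = Set.range (fun q : {q // q ∈ s} => b q) := by
    ext v; simp [Set.mem_image]
  rw [this, finrank_span_eq_card hli, Fintype.card_coe]

private theorem weylAux.exists_ne_zero_mem_inf (U V W : Submodule ℂ (EuclideanSpace ℂ (Fin n)))
    (h : 2 * n < Module.finrank ℂ U + Module.finrank ℂ V + Module.finrank ℂ W) :
    ∃ x : EuclideanSpace ℂ (Fin n), x ∈ U ⊓ V ⊓ W ∧ x ≠ 0 := by
  have hE : Module.finrank ℂ (EuclideanSpace ℂ (Fin n)) = n := by simp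
  have h1 : Module.finrank ℂ U + Module.finrank ℂ V - n ≤ Module.finrank ℂ ↥(U ⊓ V) := by
    have := Submodule.finrank_sup_add_finrank_inf_eq U V
    have hle : Module.finrank ℂ ↥(U ⊔ V) ≤ n :=
      le_trans (Submodule.finrank_le _) (le_of_eq hE)
    omega
  have h2 : Module.finrank ℂ ↥(U ⊓ V) + Module.finrank ℂ W - n
      ≤ Module.finrank ℂ ↥((U ⊓ V) ⊓ W) := by
    have := Submodule.finrank_sup_add_finrank_inf_eq (U ⊓ V) W
    have hle : Module.finrank ℂ ↥((U ⊓ V) ⊔ W) ≤ n :=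
      le_trans (Submodule.finrank_le _) (le_of_eq hE)
    omega
  have hpos : 0 < Module.finrank ℂ ↥((U ⊓ V) ⊓ W) := by omega
  have : Nontrivial ↥((U ⊓ V) ⊓ W) := Module.nontrivial_of_finrank_pos hpos
  obtain ⟨⟨x, hx⟩, hx0⟩ := exists_ne (0 : ↥((U ⊓ V) ⊓ W))
  exact ⟨x, hx, fun h => hx0 (Subtype.ext h)⟩

private theorem weylAux.quad_ge (hM : M.IsHermitian) (s : Finset (Fin n)) (c : ℝ)
    (hc : ∀ p ∈ s, c ≤ hM.eigenvalues p) {x : EuclideanSpace ℂ (Fin n)}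
    (hx : x ∈ span ℂ (hM.eigenvectorBasis '' ↑s)) :
    c * ‖x‖ ^ 2 ≤ re ⟪x, toEuclideanLin M x⟫ := by
  rw [weylAux.quad_eq_sum hM, weylAux.norm_sq_eq_sum hM.eigenvectorBasis, Finset.mul_sum]
  apply Finset.sum_le_sum
  intro p _
  by_cases hp : p ∈ s
  · exact mul_le_mul_of_nonneg_right (hc p hp) (by positivity)
  · simp [weylAux.repr_eq_zero_of_mem_span _ s hx hp]

private theorem weylAux.quad_le (hM : M.IsHermitian) (s : Finset (Fin n)) (c : ℝ)
    (hc : ∀ p ∈ s, hM.eigenvalues p ≤ c) {x : EuclideanSpace ℂ (Fin n)}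
    (hx : x ∈ span ℂ (hM.eigenvectorBasis '' ↑s)) :
    re ⟪x, toEuclideanLin M x⟫ ≤ c * ‖x‖ ^ 2 := by
  rw [weylAux.quad_eq_sum hM, weylAux.norm_sq_eq_sum hM.eigenvectorBasis, Finset.mul_sum]
  apply Finset.sum_le_sum
  intro p _
  by_cases hp : p ∈ s
  · exact mul_le_mul_of_nonneg_right (hc p hp) (by positivity)
  · simp [weylAux.repr_eq_zero_of_mem_span _ s hx hp]

end WeylAux

/-- The eigenvalues of a Hermitian matrix listed in nonincreasing order. -/
noncomputable def hermEigs {n : ℕ} {A : Matrix (Fin n) (Fin n) ℂ} (hA : A.IsHermitian) :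
    List ℝ :=
  ((Finset.univ.val.map hA.eigenvalues).sort (· ≤ ·)).reverse

/-- `hermEig hA k` is `ρ_k(A)`, the `k`-th largest eigenvalue (`k = 1, …, n`). -/
noncomputable def hermEig {n : ℕ} {A : Matrix (Fin n) (Fin n) ℂ} (hA : A.IsHermitian)
    (k : ℕ) : ℝ :=
  (hermEigs hA).getD (k - 1) 0

private theorem weylAux.hermEig_eq {n : ℕ} {A : Matrix (Fin n) (Fin n) ℂ} (hA : A.IsHermitian)
    {k : ℕ} (hk1 : 1 ≤ k) (hkn : k ≤ n) (h : n - k < n) :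
    hermEig hA k = (hA.eigenvalues ∘ Tuple.sort hA.eigenvalues) ⟨n - k, h⟩ := by
  have hlen : (hermEigs hA).length = n := by
    simp [hermEigs, weylAux.sort_eq_ofFn]
  have hk : k - 1 < (hermEigs hA).length := by omega
  rw [hermEig, List.getD_eq_getElem _ _ hk]
  simp only [hermEigs, weylAux.sort_eq_ofFn]
  rw [List.getElem_reverse]
  simp only [List.getElem_ofFn]
  congr 1
  ext
  simp only [List.length_ofFn]
  omega

/-- Weyl's inequality: for Hermitian `A, B` of order `n` and `i + j - 1 ≤ n`,
`ρ_{i+j-1}(A + B) ≤ ρ_i(A) + ρ_j(B)`. -/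
theorem weyl_inequality {n : ℕ} {A B : Matrix (Fin n) (Fin n) ℂ}
    (hA : A.IsHermitian) (hB : B.IsHermitian) (i j : ℕ) (hi : 1 ≤ i) (hj : 1 ≤ j)
    (hij : i + j - 1 ≤ n) :
    hermEig (hA.add hB) (i + j - 1) ≤ hermEig hA i + hermEig hB j := by
  have hn : 1 ≤ n := le_trans (by omega) hij
  set k := i + j - 1 with hk
  set hC : (A + B).IsHermitian := hA.add hB with hCdef
  -- index points
  have hkn : k ≤ n := hij
  have hnk : n - k < n := by omega
  have hni : n - i < n := by omega
  have hnj : n - j < n := by omega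
  set aC : Fin n := ⟨n - k, hnk⟩
  set aA : Fin n := ⟨n - i, hni⟩
  set aB : Fin n := ⟨n - j, hnj⟩
  set σC := Tuple.sort hC.eigenvalues
  set σA := Tuple.sort hA.eigenvalues
  set σB := Tuple.sort hB.eigenvalues
  -- the three index sets
  set sC : Finset (Fin n) := (Finset.Ici aC).image σC
  set sA : Finset (Fin n) := (Finset.Iic aA).image σA
  set sB : Finset (Fin n) := (Finset.Iic aB).image σB
  have cardC : sC.card = k := by
    rw [Finset.card_image_of_injective _ σC.injective, Fin.card_Ici]
    simp [aC]; omega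
  have cardA : sA.card = n - i + 1 := by
    rw [Finset.card_image_of_injective _ σA.injective, Fin.card_Iic]
  have cardB : sB.card = n - j + 1 := by
    rw [Finset.card_image_of_injective _ σB.injective, Fin.card_Iic]
  -- the subspaces
  set U : Submodule ℂ (EuclideanSpace ℂ (Fin n)) := Submodule.span ℂ (hC.eigenvectorBasis '' ↑sC)
  set V : Submodule ℂ (EuclideanSpace ℂ (Fin n)) := Submodule.span ℂ (hA.eigenvectorBasis '' ↑sA)
  set W : Submodule ℂ (EuclideanSpace ℂ (Fin n)) := Submodule.span ℂ (hB.eigenvectorBasis '' ↑sB)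
  obtain ⟨x, hx, hx0⟩ := weylAux.exists_ne_zero_mem_inf U V W (by
    rw [weylAux.finrank_span_basis, weylAux.finrank_span_basis, weylAux.finrank_span_basis,
      cardC, cardA, cardB]
    omega)
  obtain ⟨⟨hxU, hxV⟩, hxW⟩ := hx
  -- eigenvalue bounds on the sets
  have hC_ge : ∀ p ∈ sC, hermEig hC k ≤ hC.eigenvalues p := by
    intro p hp
    obtain ⟨m, hm, rfl⟩ := Finset.mem_image.1 hp
    rw [weylAux.hermEig_eq hC (by omega) hkn hnk]
    exact Tuple.monotone_sort hC.eigenvalues (Finset.mem_Ici.1 hm)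
  have hA_le : ∀ p ∈ sA, hA.eigenvalues p ≤ hermEig hA i := by
    intro p hp
    obtain ⟨m, hm, rfl⟩ := Finset.mem_image.1 hp
    rw [weylAux.hermEig_eq hA hi (by omega) hni]
    exact Tuple.monotone_sort hA.eigenvalues (Finset.mem_Iic.1 hm)
  have hB_le : ∀ p ∈ sB, hB.eigenvalues p ≤ hermEig hB j := by
    intro p hp
    obtain ⟨m, hm, rfl⟩ := Finset.mem_image.1 hp
    rw [weylAux.hermEig_eq hB hj (by omega) hnj]
    exact Tuple.monotone_sort hB.eigenvalues (Finset.mem_Iic.1 hm)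
  -- combine
  have hq1 : hermEig hC k * ‖x‖ ^ 2
      ≤ RCLike.re (inner (𝕜 := ℂ) x (Matrix.toEuclideanLin (A + B) x)) :=
    weylAux.quad_ge hC sC _ hC_ge hxU
  have hq2 : RCLike.re (inner (𝕜 := ℂ) x (Matrix.toEuclideanLin A x)) ≤ hermEig hA i * ‖x‖ ^ 2 :=
    weylAux.quad_le hA sA _ hA_le hxV
  have hq3 : RCLike.re (inner (𝕜 := ℂ) x (Matrix.toEuclideanLin B x)) ≤ hermEig hB j * ‖x‖ ^ 2 :=
    weylAux.quad_le hB sB _ hB_le hxW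
  have hsplit : RCLike.re (inner (𝕜 := ℂ) x (Matrix.toEuclideanLin (A + B) x))
      = RCLike.re (inner (𝕜 := ℂ) x (Matrix.toEuclideanLin A x))
        + RCLike.re (inner (𝕜 := ℂ) x (Matrix.toEuclideanLin B x)) := by
    rw [map_add]
    simp only [LinearMap.add_apply, inner_add_right, map_add]
  have hx2 : 0 < ‖x‖ ^ 2 := pow_pos (norm_pos_iff.mpr hx0) 2
  have : hermEig hC k * ‖x‖ ^ 2 ≤ (hermEig hA i + hermEig hB j) * ‖x‖ ^ 2 := by
    rw [add_mul]
    calc hermEig hC k * ‖x‖ ^ 2 ≤ _ := hq1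
    _ = _ := hsplit
    _ ≤ _ := add_le_add hq2 hq3
  exact le_of_mul_le_mul_right this hx2
end

section
/- Let G be a connected graph on at least three vertices, let u be a vertex of maximum degree and v a vertex of second largest degree d₂. If u and v are not adjacent and have no common neighbor, then the second largest Laplacian eigenvalue satisfies μ₂(G) ≥ d₂ + 1. -/
open Matrix Polynomial in
lemma charpoly_roots_of_isHermitian {n : Type*} [Fintype n] [DecidableEq n]
    {A : Matrix n n ℝ} (hA : A.IsHermitian) :
    A.charpoly.roots = Multiset.map hA.eigenvalues Finset.univ.val := by
  classical
  set U : Matrix n n ℝ := (hA.eigenvectorUnitary : Matrix n n ℝ) with hUdef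
  set D : Matrix n n ℝ := Matrix.diagonal hA.eigenvalues with hD
  have hUs : U * star U = 1 := Matrix.mem_unitaryGroup_iff.mp (hA.eigenvectorUnitary).2
  have hspec : A = U * D * star U := by
    have := hA.spectral_theorem
    simpa [hD, Function.comp] using this
  have hcm : charmatrix A = U.map C * charmatrix D * (star U).map C := by
    have hone : U.map C * (star U).map C = 1 := by
      rw [← Matrix.map_mul, hUs, Matrix.map_one _ (map_zero C) (map_one C)]
    have hcomm : U.map C * Matrix.scalar n (X : ℝ[X]) * (star U).map C
        = Matrix.scalar n (X : ℝ[X]) := by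
      rw [← (Matrix.scalar_commute (X : ℝ[X]) (fun r => Commute.all _ _) (U.map C)).eq,
        Matrix.mul_assoc, hone, Matrix.mul_one]
    rw [charmatrix, charmatrix, RingHom.mapMatrix_apply, RingHom.mapMatrix_apply, hspec,
      Matrix.map_mul, Matrix.map_mul, Matrix.mul_sub, Matrix.sub_mul, hcomm]
  have hdet : A.charpoly = D.charpoly := by
    rw [Matrix.charpoly, Matrix.charpoly, hcm, Matrix.det_mul, Matrix.det_mul]
    have : U.map C * (star U).map C = 1 := by
      rw [← Matrix.map_mul, hUs, Matrix.map_one _ (map_zero C) (map_one C)]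
    have hdetone : (U.map C).det * ((star U).map C).det = 1 := by
      rw [← Matrix.det_mul, this, Matrix.det_one]
    rw [mul_right_comm, hdetone, one_mul]
  rw [hdet]
  have hcmD : charmatrix D = Matrix.diagonal (fun i => (X : ℝ[X]) - C (hA.eigenvalues i)) := by
    ext i j
    by_cases h : i = j
    · subst h; simp [hD]
    · simp [h, hD, Matrix.diagonal_apply_ne _ h]
  have : D.charpoly = ∏ i : n, ((X : ℝ[X]) - C (hA.eigenvalues i)) := by
    rw [Matrix.charpoly, hcmD, Matrix.det_diagonal]
  rw [this]
  have : (∏ i : n, ((X : ℝ[X]) - C (hA.eigenvalues i)))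
      = ((Finset.univ.val.map hA.eigenvalues).map (fun a => (X : ℝ[X]) - C a)).prod := by
    rw [Multiset.map_map]; rfl
  rw [this, Polynomial.roots_multiset_prod_X_sub_C]

lemma second_of_sorted (l : List ℝ) (hl : l.Pairwise (· ≥ ·)) (c : ℝ)
    (h : 2 ≤ (l.filter (fun x => decide (c ≤ x))).length) : c ≤ l.getD 1 0 := by
  match l, hl with
  | [], _ => simp at h
  | [a], _ =>
    have := List.length_filter_le (fun x => decide (c ≤ x)) [a]
    simp at this; omega
  | a :: b :: t, hl =>
    show c ≤ b
    by_contra hb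
    push_neg at hb
    have hsort : ∀ x ∈ b :: t, ¬ (c ≤ x) := by
      intro x hx
      rcases List.mem_cons.mp hx with rfl | hx
      · exact not_le.mpr hb
      · have hbx : b ≥ x := (List.pairwise_cons.mp (List.pairwise_cons.mp hl).2).1 x hx
        exact not_le.mpr (lt_of_le_of_lt hbx hb)
    have hnil : (b :: t).filter (fun x => decide (c ≤ x)) = [] := by
      rw [List.filter_eq_nil_iff]
      intro x hx
      simpa using hsort x hx
    rw [List.filter_cons] at h
    by_cases hca : c ≤ a <;> simp [hca, hnil] at h

private lemma arith1 (A B DU DV : ℝ) (h1 : 1 ≤ DU) (h2 : 1 ≤ DV) (h3 : DV ≤ DU) :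
    (DV+1) * (A^2*(DU*(DU+1)) + B^2*(DV*(DV+1)))
      ≤ DU*(A*(DU+1))^2 + DV*(B*(DV+1))^2 := by
  have k1 : 0 ≤ A^2 * (DU*(DU+1)) * (DU - DV) :=
    mul_nonneg (mul_nonneg (sq_nonneg A) (by nlinarith)) (by linarith)
  nlinarith [k1]

private lemma arith2 (A B DU DV : ℝ) (h1 : 1 ≤ DU) (h2 : 1 ≤ DV) (hA : 0 < A^2) :
    0 < A^2*(DU*(DU+1)) + B^2*(DV*(DV+1)) := by
  nlinarith [mul_pos hA (show (0:ℝ) < DU*(DU+1) by nlinarith),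
    mul_nonneg (sq_nonneg B) (show (0:ℝ) ≤ DV*(DV+1) by nlinarith)]
open Matrix Finset in
lemma exists_two_eigs {V : Type*} [Fintype V] [DecidableEq V] (G : SimpleGraph V)
    [DecidableRel G.Adj]
    (hn : 3 ≤ Fintype.card V) (hc : G.Connected) (u v : V)
    (hu : ∀ w, G.degree w ≤ G.degree u) (hvu : v ≠ u)
    (hadj : ¬ G.Adj u v) (hcom : ∀ w, ¬(G.Adj u w ∧ G.Adj v w))
    (hL : (G.lapMatrix ℝ).IsHermitian) :
    ∃ i j, i ≠ j ∧ (G.degree v : ℝ) + 1 ≤ hL.eigenvalues i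
      ∧ (G.degree v : ℝ) + 1 ≤ hL.eigenvalues j := by
  have huv : u ≠ v := fun h => hvu h.symm
  have hadj' : ¬ G.Adj v u := fun h => hadj h.symm
  set L : Matrix V V ℝ := G.lapMatrix ℝ with hLdef
  set μ : V → ℝ := hL.eigenvalues with hμdef
  set Du : ℝ := (G.degree u : ℝ) with hDu
  set Dv : ℝ := (G.degree v : ℝ) with hDv
  set c : ℝ := Dv + 1 with hcdef
  -- positive degrees
  have hdeg : ∀ w : V, 1 ≤ G.degree w := by
    intro w
    obtain ⟨w', hw'⟩ := Fintype.exists_ne_of_one_lt_card (by omega) w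
    have hreach := hc.preconnected w w'
    obtain ⟨p⟩ := hreach
    cases p with
    | nil => exact absurd rfl hw'
    | cons h q => exact (G.degree_pos_iff_exists_adj w).mpr ⟨_, h⟩
  have hDu1 : (1:ℝ) ≤ Du := by rw [hDu]; exact_mod_cast hdeg u
  have hDv1 : (1:ℝ) ≤ Dv := by rw [hDv]; exact_mod_cast hdeg v
  have hDvu : Dv ≤ Du := by rw [hDu, hDv]; exact_mod_cast hu v
  -- the two star vectors
  set x : V → ℝ := fun w => if w = u then Du else if G.Adj u w then -1 else 0 with hxdef
  set y : V → ℝ := fun w => if w = v then Dv else if G.Adj v w then -1 else 0 with hydef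
  have hxy0 : ∀ w, x w * y w = 0 := by
    intro w
    by_cases h1 : w = u
    · subst h1; simp [hxdef, hydef, huv, hadj']
    · by_cases h2 : w = v
      · subst h2; simp [hxdef, hydef, hvu, hadj]
      · by_cases h3 : G.Adj u w
        · have h4 : ¬ G.Adj v w := fun h => hcom w ⟨h3, h⟩
          simp [hxdef, hydef, h1, h2, h3, h4]
        · simp [hxdef, hydef, h1, h2, h3]
  have hxsq : ∀ w, x w * x w = (if w = u then Du * Du else 0) + (if G.Adj u w then 1 else 0) := by
    intro w
    by_cases h1 : w = u
    · subst h1; simp [hxdef, G.irrefl]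
    · by_cases h2 : G.Adj u w <;> simp [hxdef, h1, h2]
  have hysq : ∀ w, y w * y w = (if w = v then Dv * Dv else 0) + (if G.Adj v w then 1 else 0) := by
    intro w
    by_cases h1 : w = v
    · subst h1; simp [hydef, G.irrefl]
    · by_cases h2 : G.Adj v w <;> simp [hydef, h1, h2]
  have hxx : x ⬝ᵥ x = Du * (Du + 1) := by
    unfold dotProduct
    simp_rw [hxsq]
    rw [Finset.sum_add_distrib, Finset.sum_ite_eq' Finset.univ u (fun _ => Du * Du),
      if_pos (Finset.mem_univ u), ← SimpleGraph.degree_eq_sum_if_adj, ← hDu]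
    ring
  have hyy : y ⬝ᵥ y = Dv * (Dv + 1) := by
    unfold dotProduct
    simp_rw [hysq]
    rw [Finset.sum_add_distrib, Finset.sum_ite_eq' Finset.univ v (fun _ => Dv * Dv),
      if_pos (Finset.mem_univ v), ← SimpleGraph.degree_eq_sum_if_adj, ← hDv]
    ring
  have hxyd : x ⬝ᵥ y = 0 := by
    unfold dotProduct
    simp_rw [hxy0]
    simp
  -- quadratic form lower bound on span{x,y}
  have quad : ∀ a b : ℝ, (fun w => a * x w + b * y w) ⬝ᵥ (L *ᵥ (fun w => a * x w + b * y w))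
      ≥ Du * (a * (Du + 1))^2 + Dv * (b * (Dv + 1))^2 := by
    intro a b
    set z : V → ℝ := fun w => a * x w + b * y w with hzdef
    have hq_eq : z ⬝ᵥ (L *ᵥ z)
        = (∑ i : V, ∑ j : V, if G.Adj i j then (z i - z j)^2 else 0) / 2 := by
      rw [← Matrix.toLinearMap₂'_apply', hLdef, SimpleGraph.lapMatrix_toLinearMap₂']
    -- values of z on the stars
    have hzu : z u = a * Du := by simp [hzdef, hxdef, hydef, huv, hadj']
    have hzv : z v = b * Dv := by simp [hzdef, hxdef, hydef, hvu, hadj]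
    have hzNu : ∀ j, G.Adj u j → z j = -a := by
      intro j hj
      have h1 : j ≠ u := fun h => G.irrefl (h ▸ hj)
      have h2 : j ≠ v := fun h => hadj (h ▸ hj)
      have h3 : ¬ G.Adj v j := fun h => hcom j ⟨hj, h⟩
      simp [hzdef, hxdef, hydef, h1, h2, hj, h3]
    have hzNv : ∀ j, G.Adj v j → z j = -b := by
      intro j hj
      have h1 : j ≠ v := fun h => G.irrefl (h ▸ hj)
      have h2 : j ≠ u := fun h => hadj' (h ▸ hj)
      have h3 : ¬ G.Adj u j := fun h => hcom j ⟨h, hj⟩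
      simp [hzdef, hxdef, hydef, h1, h2, hj, h3]
    -- pointwise bound
    have key1 : ∀ i j : V,
        (if i = u ∧ G.Adj i j then (z i - z j)^2 else 0)
        + (if j = u ∧ G.Adj j i then (z j - z i)^2 else 0)
        + (if i = v ∧ G.Adj i j then (z i - z j)^2 else 0)
        + (if j = v ∧ G.Adj j i then (z j - z i)^2 else 0)
        ≤ (if G.Adj i j then (z i - z j)^2 else 0) := by
      intro i j
      have hsq : (z j - z i)^2 = (z i - z j)^2 := by ring
      by_cases hij : G.Adj i j
      · have hji : G.Adj j i := hij.symm
        have hne : i ≠ j := hij.ne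
        rw [if_pos hij]
        by_cases h1 : i = u
        · have n2 : ¬(j = u ∧ G.Adj j i) := fun hh => hne (h1.trans hh.1.symm)
          have n3 : ¬(i = v ∧ G.Adj i j) := fun hh => huv (h1 ▸ hh.1)
          have n4 : ¬(j = v ∧ G.Adj j i) := fun hh => hadj (h1 ▸ hh.1 ▸ hij)
          rw [if_pos ⟨h1, hij⟩, if_neg n2, if_neg n3, if_neg n4]
          linarith
        · by_cases h2 : j = u
          · have n3 : ¬(i = v ∧ G.Adj i j) := fun hh => hadj (h2 ▸ hh.1 ▸ hji)
            have n4 : ¬(j = v ∧ G.Adj j i) := fun hh => huv (h2 ▸ hh.1)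
            rw [if_neg (fun hh => h1 hh.1), if_pos ⟨h2, hji⟩, if_neg n3, if_neg n4]
            linarith [hsq]
          · by_cases h3 : i = v
            · have n4 : ¬(j = v ∧ G.Adj j i) := fun hh => hne (h3.trans hh.1.symm)
              rw [if_neg (fun hh => h1 hh.1), if_neg (fun hh => h2 hh.1),
                if_pos ⟨h3, hij⟩, if_neg n4]
              linarith
            · by_cases h4 : j = v
              · rw [if_neg (fun hh => h1 hh.1), if_neg (fun hh => h2 hh.1),
                  if_neg (fun hh => h3 hh.1), if_pos ⟨h4, hji⟩]
                linarith [hsq]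
              · rw [if_neg (fun hh => h1 hh.1), if_neg (fun hh => h2 hh.1),
                  if_neg (fun hh => h3 hh.1), if_neg (fun hh => h4 hh.1)]
                simp [sq_nonneg]
      · have hji : ¬ G.Adj j i := fun h => hij h.symm
        rw [if_neg hij, if_neg (fun hh => hij hh.2), if_neg (fun hh => hji hh.2),
          if_neg (fun hh => hij hh.2), if_neg (fun hh => hji hh.2)]
        simp
    -- sums of the star terms
    have hsumu : ∑ i : V, ∑ j : V, (if i = u ∧ G.Adj i j then (z i - z j)^2 else 0)
        = Du * (a * (Du + 1))^2 := by
      have h1 : ∀ i : V, (∑ j : V, if i = u ∧ G.Adj i j then (z i - z j)^2 else 0)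
          = if i = u then Du * (a * (Du + 1))^2 else 0 := by
        intro i
        by_cases h : i = u
        · have h2 : ∀ j : V, (if G.Adj u j then (z u - z j)^2 else 0)
              = (a * (Du + 1))^2 * (if G.Adj u j then 1 else 0) := by
            intro j
            by_cases hj : G.Adj u j
            · rw [if_pos hj, if_pos hj, hzu, hzNu j hj, mul_one]; ring
            · simp [hj]
          simp only [h, eq_self_iff_true, if_true, true_and]
          simp_rw [h2]
          rw [← Finset.mul_sum, ← SimpleGraph.degree_eq_sum_if_adj, ← hDu]
          ring
        · simp [h]
      simp_rw [h1]
      rw [Finset.sum_ite_eq' Finset.univ u, if_pos (Finset.mem_univ u)]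
    have hsumv : ∑ i : V, ∑ j : V, (if i = v ∧ G.Adj i j then (z i - z j)^2 else 0)
        = Dv * (b * (Dv + 1))^2 := by
      have h1 : ∀ i : V, (∑ j : V, if i = v ∧ G.Adj i j then (z i - z j)^2 else 0)
          = if i = v then Dv * (b * (Dv + 1))^2 else 0 := by
        intro i
        by_cases h : i = v
        · have h2 : ∀ j : V, (if G.Adj v j then (z v - z j)^2 else 0)
              = (b * (Dv + 1))^2 * (if G.Adj v j then 1 else 0) := by
            intro j
            by_cases hj : G.Adj v j
            · rw [if_pos hj, if_pos hj, hzv, hzNv j hj, mul_one]; ring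
            · simp [hj]
          simp only [h, eq_self_iff_true, if_true, true_and]
          simp_rw [h2]
          rw [← Finset.mul_sum, ← SimpleGraph.degree_eq_sum_if_adj, ← hDv]
          ring
        · simp [h]
      simp_rw [h1]
      rw [Finset.sum_ite_eq' Finset.univ v, if_pos (Finset.mem_univ v)]
    have hsumu' : ∑ i : V, ∑ j : V, (if j = u ∧ G.Adj j i then (z j - z i)^2 else 0)
        = Du * (a * (Du + 1))^2 := by
      rw [Finset.sum_comm]; exact hsumu
    have hsumv' : ∑ i : V, ∑ j : V, (if j = v ∧ G.Adj j i then (z j - z i)^2 else 0)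
        = Dv * (b * (Dv + 1))^2 := by
      rw [Finset.sum_comm]; exact hsumv
    have hsum_le : ∑ i : V, ∑ j : V,
        ((if i = u ∧ G.Adj i j then (z i - z j)^2 else 0)
        + (if j = u ∧ G.Adj j i then (z j - z i)^2 else 0)
        + (if i = v ∧ G.Adj i j then (z i - z j)^2 else 0)
        + (if j = v ∧ G.Adj j i then (z j - z i)^2 else 0))
        ≤ ∑ i : V, ∑ j : V, (if G.Adj i j then (z i - z j)^2 else 0) :=
      Finset.sum_le_sum fun i _ => Finset.sum_le_sum fun j _ => key1 i j
    simp_rw [Finset.sum_add_distrib] at hsum_le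
    rw [hsumu, hsumu', hsumv, hsumv'] at hsum_le
    rw [ge_iff_le, hq_eq]
    linarith
  -- spectral setup
  by_contra hcon
  have hi₀ : ∃ i₀ : V, ∀ i, i ≠ i₀ → μ i < c := by
    by_cases hex : ∃ i, c ≤ μ i
    · obtain ⟨i₀, hi₀⟩ := hex
      refine ⟨i₀, fun i hi => ?_⟩
      by_contra hle
      push_neg at hle
      exact hcon ⟨i, i₀, hi, hle, hi₀⟩
    · push_neg at hex
      exact ⟨u, fun i _ => hex i⟩
  obtain ⟨i₀, hi₀⟩ := hi₀
  set β := hL.eigenvectorBasis with hβ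
  have heig : ∀ i, L *ᵥ ⇑(β i) = μ i • ⇑(β i) := fun i => hL.mulVec_eigenvectorBasis i
  have parseval : ∀ f g : V → ℝ, ∑ i, (f ⬝ᵥ ⇑(β i)) * (⇑(β i) ⬝ᵥ g) = f ⬝ᵥ g := by
    intro f g
    have h := β.sum_inner_mul_inner ((WithLp.equiv 2 (V → ℝ)).symm f)
      ((WithLp.equiv 2 (V → ℝ)).symm g)
    simpa [PiLp.inner_apply, RCLike.inner_apply, conj_trivial, dotProduct,
      mul_comm] using h
  have hsym : ∀ (f : V → ℝ) i, ⇑(β i) ⬝ᵥ (L *ᵥ f) = μ i * (⇑(β i) ⬝ᵥ f) := by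
    intro f i
    rw [Matrix.dotProduct_mulVec, ← Matrix.mulVec_transpose,
      show Lᵀ = L from G.isSymm_lapMatrix ℝ, heig i, smul_dotProduct, smul_eq_mul]
  set p : ℝ := ⇑(β i₀) ⬝ᵥ x with hp
  set q0 : ℝ := ⇑(β i₀) ⬝ᵥ y with hq0
  obtain ⟨a, b, hab, horth⟩ : ∃ a b : ℝ, ¬(a = 0 ∧ b = 0) ∧ a * p + b * q0 = 0 := by
    by_cases hpq : p = 0 ∧ q0 = 0
    · exact ⟨1, 0, by simp, by simp [hpq.1, hpq.2]⟩
    · refine ⟨q0, -p, fun hh => hpq ⟨neg_eq_zero.mp hh.2, hh.1⟩, by ring⟩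
  set z : V → ℝ := a • x + b • y with hz
  have hz' : z = fun w => a * x w + b * y w := by
    funext w; simp [hz]
  have hcoef : ∀ i, ⇑(β i) ⬝ᵥ z = a * (⇑(β i) ⬝ᵥ x) + b * (⇑(β i) ⬝ᵥ y) := by
    intro i
    rw [hz, dotProduct_add, dotProduct_smul, dotProduct_smul,
      smul_eq_mul, smul_eq_mul]
  have hz0 : ⇑(β i₀) ⬝ᵥ z = 0 := by rw [hcoef i₀]; exact horth
  have hyx : y ⬝ᵥ x = 0 := by rw [dotProduct_comm]; exact hxyd
  have hzz : z ⬝ᵥ z = a^2 * (Du * (Du+1)) + b^2 * (Dv * (Dv+1)) := by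
    rw [hz, dotProduct_add, add_dotProduct, add_dotProduct,
      smul_dotProduct, smul_dotProduct, smul_dotProduct,
      smul_dotProduct, dotProduct_smul, dotProduct_smul,
      dotProduct_smul, dotProduct_smul, hxx, hyy, hxyd, hyx]
    simp only [smul_eq_mul]
    ring
  have hq : z ⬝ᵥ (L *ᵥ z) ≥ Du * (a * (Du + 1))^2 + Dv * (b * (Dv + 1))^2 := by
    rw [hz']; exact quad a b
  have hzzpos : 0 < z ⬝ᵥ z := by
    rw [hzz]
    rcases not_and_or.mp hab with ha | hb
    · exact arith2 a b Du Dv hDu1 hDv1 (by positivity)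
    · have := arith2 b a Dv Du hDv1 hDu1 (by positivity)
      linarith
  have hne_erase : (Finset.univ.erase i₀).Nonempty := by
    obtain ⟨j₀, hj₀⟩ := Fintype.exists_ne_of_one_lt_card (by omega) i₀
    exact ⟨j₀, Finset.mem_erase.mpr ⟨hj₀, Finset.mem_univ _⟩⟩
  set M : ℝ := (Finset.univ.erase i₀).sup' hne_erase μ with hM
  have hMlt : M < c := (Finset.sup'_lt_iff hne_erase).mpr
    (fun i hi => hi₀ i (Finset.mem_erase.mp hi).1)
  have hq_expand : z ⬝ᵥ (L *ᵥ z) = ∑ i, μ i * (⇑(β i) ⬝ᵥ z)^2 := by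
    rw [← parseval z (L *ᵥ z)]
    refine Finset.sum_congr rfl fun i _ => ?_
    rw [hsym z i, dotProduct_comm z (⇑(β i))]
    ring
  have hnorm_expand : z ⬝ᵥ z = ∑ i, (⇑(β i) ⬝ᵥ z)^2 := by
    rw [← parseval z z]
    refine Finset.sum_congr rfl fun i _ => ?_
    rw [dotProduct_comm z (⇑(β i))]
    ring
  have hub : z ⬝ᵥ (L *ᵥ z) ≤ M * (z ⬝ᵥ z) := by
    rw [hq_expand, hnorm_expand, Finset.mul_sum]
    refine Finset.sum_le_sum fun i _ => ?_
    by_cases hi : i = i₀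
    · rw [hi, hz0]
      simp
    · have hle : μ i ≤ M := Finset.le_sup' μ (Finset.mem_erase.mpr ⟨hi, Finset.mem_univ i⟩)
      exact mul_le_mul_of_nonneg_right hle (sq_nonneg _)
  have hlb : c * (z ⬝ᵥ z) ≤ z ⬝ᵥ (L *ᵥ z) := by
    refine le_trans ?_ hq
    rw [hzz, hcdef]
    exact arith1 a b Du Dv hDu1 hDv1 hDvu
  have hcM : c ≤ M := (mul_le_mul_iff_of_pos_right hzzpos).mp (hlb.trans hub)
  linarith

lemma count_ge {V : Type*} [Fintype V] [DecidableEq V] (G : SimpleGraph V) [DecidableRel G.Adj]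
    (hn : 3 ≤ Fintype.card V) (hc : G.Connected) (u v : V)
    (hu : ∀ w, G.degree w ≤ G.degree u) (hvu : v ≠ u)
    (hadj : ¬ G.Adj u v) (hcom : ∀ w, ¬(G.Adj u w ∧ G.Adj v w))
    (C : ℝ) (hC : C = (G.degree v : ℝ) + 1) :
    2 ≤ (List.filter (fun x => decide (C ≤ x))
        ((((G.lapMatrix ℝ).charpoly.roots).sort (· ≤ ·)).reverse)).length := by
  have hL : (G.lapMatrix ℝ).IsHermitian := by
    rw [Matrix.IsHermitian, Matrix.conjTranspose_eq_transpose_of_trivial]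
    exact G.isSymm_lapMatrix ℝ
  obtain ⟨i, j, hij, hi, hj⟩ := exists_two_eigs G hn hc u v hu hvu hadj hcom hL
  rw [← hC] at hi hj
  have hlen : (List.filter (fun x => decide (C ≤ x))
        ((((G.lapMatrix ℝ).charpoly.roots).sort (· ≤ ·)).reverse)).length
      = Multiset.card (Multiset.filter (fun x => C ≤ x)
          ((G.lapMatrix ℝ).charpoly.roots)) := by
    have h1 : ((((G.lapMatrix ℝ).charpoly.roots).sort (· ≤ ·)).reverse : Multiset ℝ)
        = (G.lapMatrix ℝ).charpoly.roots := by
      rw [Multiset.coe_reverse, Multiset.sort_eq]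
    calc (List.filter (fun x => decide (C ≤ x))
        ((((G.lapMatrix ℝ).charpoly.roots).sort (· ≤ ·)).reverse)).length
        = Multiset.card ((List.filter (fun x => decide (C ≤ x))
            ((((G.lapMatrix ℝ).charpoly.roots).sort (· ≤ ·)).reverse) : List ℝ) : Multiset ℝ) :=
          (Multiset.coe_card _).symm
      _ = Multiset.card (Multiset.filter (fun x => C ≤ x)
            (((((G.lapMatrix ℝ).charpoly.roots).sort (· ≤ ·)).reverse : List ℝ) : Multiset ℝ)) := by
          rw [Multiset.filter_coe]
      _ = Multiset.card (Multiset.filter (fun x => C ≤ x)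
            ((G.lapMatrix ℝ).charpoly.roots)) := by rw [h1]
  rw [hlen, charpoly_roots_of_isHermitian hL, Multiset.filter_map, Multiset.card_map,
    ← Finset.filter_val, ← Finset.card_def]
  refine Finset.one_lt_card.mpr ⟨i, Finset.mem_filter.mpr ⟨Finset.mem_univ i, hi⟩,
    j, Finset.mem_filter.mpr ⟨Finset.mem_univ j, hj⟩, hij⟩



open scoped Classical in
/-- The multiset of Laplacian eigenvalues (roots of the characteristic polynomial of `L = D - A`). -/
noncomputable def lapSpectrum {V : Type*} [Fintype V] (G : SimpleGraph V) : Multiset ℝ :=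
  (G.lapMatrix ℝ).charpoly.roots

/-- The Laplacian eigenvalues listed in nonincreasing order. -/
noncomputable def lapEigs {V : Type*} [Fintype V] (G : SimpleGraph V) : List ℝ :=
  ((lapSpectrum G).sort (· ≤ ·)).reverse

/-- `lapEig G k` is `μ_k(G)`, the `k`-th largest Laplacian eigenvalue (`k = 1, …, n`). -/
noncomputable def lapEig {V : Type*} [Fintype V] (G : SimpleGraph V) (k : ℕ) : ℝ :=
  (lapEigs G).getD (k - 1) 0

open scoped Classical in
/-- The number of Laplacian eigenvalues (with multiplicity) satisfying predicate `p`. -/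
noncomputable def lapCount {V : Type*} [Fintype V] (G : SimpleGraph V) (p : ℝ → Prop) : ℕ :=
  ((lapSpectrum G).filter p).card

/-- If `u` has maximum degree, `v` has second largest degree `d₂`, `u` and `v` are not
adjacent and have no common neighbor, then `μ₂(G) ≥ d₂ + 1`. -/
theorem lapEig_two_ge {V : Type*} [Fintype V] (G : SimpleGraph V) [DecidableRel G.Adj]
    (hn : 3 ≤ Fintype.card V) (hc : G.Connected) (u v : V)
    (hu : ∀ w, G.degree w ≤ G.degree u)
    (hvu : v ≠ u) (hv : ∀ w, w ≠ u → G.degree w ≤ G.degree v)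
    (hadj : ¬ G.Adj u v) (hcom : ∀ w, ¬(G.Adj u w ∧ G.Adj v w)) :
    (G.degree v : ℝ) + 1 ≤ lapEig G 2 := by
  classical
  have hdeg_congr : ∀ (w : V) (i1 i2 : Fintype (G.neighborSet w)),
      @SimpleGraph.degree V G w i1 = @SimpleGraph.degree V G w i2 :=
    fun w i1 i2 => congrArg _ (Subsingleton.elim i1 i2)
  simp only [lapEig, lapEigs, lapSpectrum, show (2:ℕ) - 1 = 1 from rfl]
  refine second_of_sorted _ ?_ _ ?_
  · exact List.pairwise_reverse.mpr (Multiset.pairwise_sort _ (fun a b => a ≤ b))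
  · refine @count_ge V _ (fun a b => Classical.propDecidable (a = b)) G
      (fun a b => Classical.propDecidable (G.Adj a b)) hn hc u v ?_ hvu hadj hcom _ ?_
    · intro w
      exact le_trans (le_of_eq (hdeg_congr w _ _))
        (le_trans (hu w) (le_of_eq (hdeg_congr u _ _)))
    · rw [hdeg_congr v _ _]
end

section
/- Let G be a graph with p pendant vertices and q quasi-pendant vertices. Then the multiplicity of 1 as a Laplacian eigenvalue of G is at least p - q. -/
section FariaAux


open Polynomial Matrix

section Spectral

variable {n : Type*} [Fintype n] [DecidableEq n]

lemma myCharpoly_diagonal (d : n → ℝ) :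
    (Matrix.diagonal d).charpoly = ∏ i, (X - C (d i)) := by
  have h : charmatrix (Matrix.diagonal d) = Matrix.diagonal fun i => X - C (d i) := by
    ext i j
    by_cases hij : i = j
    · subst hij; simp [charmatrix_apply_eq]
    · simp [charmatrix_apply_ne _ _ _ hij, Matrix.diagonal_apply_ne _ hij]
  rw [Matrix.charpoly, h, Matrix.det_diagonal]

lemma myCharpoly_conj (U M : Matrix n n ℝ) (hU : U * star U = 1) :
    (U * M * star U).charpoly = M.charpoly := by
  have hmapUU : U.map C * (star U).map C = 1 := by
    rw [← Matrix.map_mul, hU, Matrix.map_one _ (map_zero C) (map_one C)]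
  have hcm : charmatrix (U * M * star U) = (U.map C) * charmatrix M * ((star U).map C) := by
    rw [charmatrix, charmatrix]
    rw [Matrix.mul_sub, Matrix.sub_mul]
    congr 1
    · rw [Matrix.mul_assoc, (Matrix.scalar_commute (X : ℝ[X]) (fun r => Commute.all _ _)
        ((star U).map C)).eq, ← Matrix.mul_assoc, hmapUU, Matrix.one_mul]
    · simp [RingHom.mapMatrix_apply, Matrix.map_mul]
  rw [Matrix.charpoly, hcm, Matrix.det_mul, Matrix.det_mul, Matrix.charpoly]
  have : (U.map C).det * (charmatrix M).det * ((star U).map C).det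
      = ((U.map C) * ((star U).map C)).det * (charmatrix M).det := by
    rw [Matrix.det_mul]; ring
  rw [this, hmapUU]
  simp

lemma myCharpoly_hermitian (A : Matrix n n ℝ) (hA : A.IsHermitian) :
    A.charpoly = ∏ i, (X - C (hA.eigenvalues i)) := by
  have hs := hA.spectral_theorem
  have hid : (RCLike.ofReal ∘ hA.eigenvalues : n → ℝ) = hA.eigenvalues := rfl
  rw [hid, Unitary.conjStarAlgAut_apply] at hs
  conv_lhs => rw [hs]
  rw [myCharpoly_conj _ _ (Matrix.mem_unitaryGroup_iff.mp hA.eigenvectorUnitary.2),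
    myCharpoly_diagonal]

open scoped Classical in
lemma myCount_roots_hermitian (A : Matrix n n ℝ) (hA : A.IsHermitian) (μ : ℝ) :
    A.charpoly.roots.count μ = Fintype.card {i // hA.eigenvalues i = μ} := by
  rw [myCharpoly_hermitian A hA]
  have : ∏ i, (X - C (hA.eigenvalues i))
      = ((Finset.univ.val.map hA.eigenvalues).map fun a => X - C a).prod := by
    rw [Multiset.map_map]; rfl
  rw [this, Polynomial.roots_multiset_prod_X_sub_C, Multiset.count_map, Fintype.card_subtype]
  congr 1
  rw [Finset.filter_val]
  exact Multiset.filter_congr (fun i _ => eq_comm)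

end Spectral

section Spectral2

variable {n : Type*} [Fintype n] [DecidableEq n]

open scoped Classical in
lemma myFinrank_ker_hermitian (A : Matrix n n ℝ) (hA : A.IsHermitian) (μ : ℝ) :
    Module.finrank ℝ ↥(LinearMap.ker (A - μ • (1 : Matrix n n ℝ)).mulVecLin)
      = Fintype.card {i // hA.eigenvalues i = μ} := by
  set U : Matrix n n ℝ := (hA.eigenvectorUnitary : Matrix n n ℝ) with hUdef
  have hUU : U * star U = 1 := Matrix.mem_unitaryGroup_iff.mp hA.eigenvectorUnitary.2
  have hUU' : star U * U = 1 := Matrix.mem_unitaryGroup_iff'.mp hA.eigenvectorUnitary.2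
  have hdetU : IsUnit U.det := by
    apply IsUnit.of_mul_eq_one (star U).det
    rw [← Matrix.det_mul, hUU, Matrix.det_one]
  have hdetsU : IsUnit (star U).det := by
    apply IsUnit.of_mul_eq_one U.det
    rw [← Matrix.det_mul, hUU', Matrix.det_one]
  have hs := hA.spectral_theorem
  have hid : (RCLike.ofReal ∘ hA.eigenvalues : n → ℝ) = hA.eigenvalues := rfl
  rw [hid, Unitary.conjStarAlgAut_apply] at hs
  have hconj : A - μ • (1 : Matrix n n ℝ)
      = U * Matrix.diagonal (fun i => hA.eigenvalues i - μ) * star U := by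
    have h1 : (Matrix.diagonal fun i => hA.eigenvalues i - μ)
        = Matrix.diagonal hA.eigenvalues - μ • 1 := by
      rw [Matrix.smul_one_eq_diagonal, Matrix.diagonal_sub]
    rw [h1, Matrix.mul_sub, Matrix.sub_mul, ← hs]
    congr 1
    rw [Matrix.mul_smul, Matrix.smul_mul, Matrix.mul_one, hUU]
  have hrank : (A - μ • (1 : Matrix n n ℝ)).rank
      = Fintype.card {i // hA.eigenvalues i - μ ≠ 0} := by
    rw [hconj, Matrix.rank_mul_eq_left_of_isUnit_det _ _ hdetsU,
      Matrix.rank_mul_eq_right_of_isUnit_det _ _ hdetU, Matrix.rank_diagonal]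
  have hrn := LinearMap.finrank_range_add_finrank_ker (A - μ • (1 : Matrix n n ℝ)).mulVecLin
  rw [Module.finrank_pi] at hrn
  have hrankdef : (A - μ • (1 : Matrix n n ℝ)).rank
      = Module.finrank ℝ ↥(LinearMap.range (A - μ • (1 : Matrix n n ℝ)).mulVecLin) := rfl
  have hcompl : Fintype.card {i // hA.eigenvalues i - μ ≠ 0}
      + Fintype.card {i // hA.eigenvalues i = μ} = Fintype.card n := by
    have h2 : ∀ i, (hA.eigenvalues i - μ ≠ 0) ↔ ¬ (hA.eigenvalues i = μ) := by
      intro i; constructor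
      · intro h h'; exact h (by rw [h', sub_self])
      · intro h h'; exact h (by linarith [sub_eq_zero.mp h'])
    rw [Fintype.card_congr (Equiv.subtypeEquivRight h2), Fintype.card_subtype_compl]
    have := Fintype.card_subtype_le (fun i => hA.eigenvalues i = μ)
    omega
  omega

end Spectral2

section Comb

open Finset

variable {V : Type*} [Fintype V] (G : SimpleGraph V) [DecidableRel G.Adj]

/-- Extension by zero from pendant vertices. -/
noncomputable def pendExt : ({v : V // G.degree v = 1} → ℝ) →ₗ[ℝ] (V → ℝ) where
  toFun x v := if h : G.degree v = 1 then x ⟨v, h⟩ else 0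
  map_add' x y := by funext v; by_cases h : G.degree v = 1 <;> simp [h]
  map_smul' c x := by funext v; by_cases h : G.degree v = 1 <;> simp [h]

lemma pendExt_injective : Function.Injective (pendExt G) := by
  intro x y hxy
  funext p
  have := congrFun hxy (p : V)
  simpa [pendExt, p.2] using this

/-- The pendant-neighbor-sum map to quasi-pendant vertices. -/
noncomputable def quasiMap :
    ({v : V // G.degree v = 1} → ℝ) →ₗ[ℝ] ({v : V // ∃ u, G.Adj v u ∧ G.degree u = 1} → ℝ) :=
  Matrix.mulVecLin (fun u p => if G.Adj (u : V) (p : V) then 1 else 0)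

lemma key_sum (x : {v : V // G.degree v = 1} → ℝ) (hx : quasiMap G x = 0) (v : V) :
    ∑ u ∈ G.neighborFinset v, (pendExt G x) u = 0 := by
  classical
  have hexp : ∑ u ∈ G.neighborFinset v, (pendExt G x) u
      = ∑ p : {v : V // G.degree v = 1}, (if G.Adj v (p : V) then 1 else 0) * x p := by
    rw [SimpleGraph.neighborFinset_eq_filter, Finset.sum_filter]
    have h1 : ∑ a : V, (if G.Adj v a then (pendExt G x) a else 0)
        = ∑ a ∈ Finset.univ.filter (fun u => G.degree u = 1),
            (if G.Adj v a then (pendExt G x) a else 0) := by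
      symm
      apply Finset.sum_subset (Finset.filter_subset _ _)
      intro a _ ha
      have hd : ¬ G.degree a = 1 := by simpa using ha
      simp [pendExt, hd]
    rw [h1, Finset.sum_subtype (p := fun u => G.degree u = 1) (Finset.univ.filter fun u => G.degree u = 1)
      (fun u => by simp) (fun u => if G.Adj v u then (pendExt G x) u else 0)]
    apply Finset.sum_congr rfl
    intro p _
    have hp : (pendExt G x) (p : V) = x p := by
      simp [pendExt, p.2]
    rw [hp, ite_mul, one_mul, zero_mul]
  by_cases hq : ∃ u, G.Adj v u ∧ G.degree u = 1
  · have := congrFun hx ⟨v, hq⟩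
    rw [hexp]
    change (Matrix.mulVec (fun (u : {v : V // ∃ u, G.Adj v u ∧ G.degree u = 1}) (p : {v : V // G.degree v = 1}) => if G.Adj (u : V) (p : V) then (1 : ℝ) else 0) x) ⟨v, hq⟩ = 0 at this
    simpa [quasiMap, Matrix.mulVecLin_apply, Matrix.mulVec, dotProduct] using this
  · rw [hexp]
    apply Finset.sum_eq_zero
    intro p _
    have : ¬ G.Adj v (p : V) := fun h => hq ⟨p, h, p.2⟩
    simp [this]

end Comb

section Main

open Finset

variable {V : Type*} [Fintype V] (G : SimpleGraph V) [DecidableRel G.Adj]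

lemma pendExt_mem_ker [DecidableEq V] (x : {v : V // G.degree v = 1} → ℝ)
    (hx : quasiMap G x = 0) :
    (G.lapMatrix ℝ - (1 : ℝ) • (1 : Matrix V V ℝ)).mulVecLin (pendExt G x) = 0 := by
  funext v
  rw [Matrix.mulVecLin_apply, Matrix.sub_mulVec, one_smul, Matrix.one_mulVec]
  have hL := G.lapMatrix_mulVec_apply (R := ℝ) v ((pendExt G) x)
  rw [Pi.sub_apply, Pi.zero_apply, hL, key_sum G x hx v]
  by_cases h : G.degree v = 1
  · rw [h]; push_cast; ring
  · have : (pendExt G x) v = 0 := by simp [pendExt, h]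
    rw [this]; ring

end Main

open scoped Classical in
theorem myAux {V : Type*} [Fintype V] (G : SimpleGraph V) [DecidableEq V]
    [DecidableRel G.Adj] :
    ((Finset.univ.filter fun v => G.degree v = 1).card : ℤ) -
        (Finset.univ.filter fun v => ∃ u, G.Adj v u ∧ G.degree u = 1).card ≤
      (((G.lapMatrix ℝ).charpoly.roots).count 1 : ℤ) := by
  set L := G.lapMatrix ℝ with hLdef
  have hL : L.IsHermitian := by
    rw [Matrix.IsHermitian, Matrix.conjTranspose_eq_transpose_of_trivial]
    exact G.isSymm_lapMatrix (R := ℝ)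
  have hcount : (L.charpoly.roots.count 1 : ℤ)
      = Module.finrank ℝ ↥(LinearMap.ker (L - (1 : ℝ) • (1 : Matrix V V ℝ)).mulVecLin) := by
    rw [myCount_roots_hermitian L hL 1, myFinrank_ker_hermitian L hL 1]
  rw [hcount]
  have hinj := pendExt_injective G
  set K := LinearMap.ker (quasiMap G) with hK
  have hmap : Submodule.map (pendExt G) K
      ≤ LinearMap.ker (L - (1 : ℝ) • (1 : Matrix V V ℝ)).mulVecLin := by
    rintro y ⟨x, hxK, rfl⟩
    exact pendExt_mem_ker G x (LinearMap.mem_ker.mp hxK)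
  have h1 : Module.finrank ℝ ↥K = Module.finrank ℝ ↥(Submodule.map (pendExt G) K) :=
    (Submodule.equivMapOfInjective _ hinj K).finrank_eq
  have h2 : Module.finrank ℝ ↥(Submodule.map (pendExt G) K)
      ≤ Module.finrank ℝ ↥(LinearMap.ker (L - (1 : ℝ) • (1 : Matrix V V ℝ)).mulVecLin) :=
    Submodule.finrank_mono hmap
  have hrn := LinearMap.finrank_range_add_finrank_ker (quasiMap G)
  rw [Module.finrank_pi] at hrn
  have hrange : Module.finrank ℝ ↥(LinearMap.range (quasiMap G))
      ≤ Fintype.card {v : V // ∃ u, G.Adj v u ∧ G.degree u = 1} := by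
    have := Submodule.finrank_le (LinearMap.range (quasiMap G))
    rwa [Module.finrank_pi] at this
  have hPcard : (Finset.univ.filter fun v => G.degree v = 1).card
      = Fintype.card {v : V // G.degree v = 1} := (Fintype.card_subtype _).symm
  have hQcard : (Finset.univ.filter fun v => ∃ u, G.Adj v u ∧ G.degree u = 1).card
      = Fintype.card {v : V // ∃ u, G.Adj v u ∧ G.degree u = 1} := (Fintype.card_subtype _).symm
  rw [hPcard, hQcard]
  rw [← hK] at hrn
  omega

end FariaAux

open scoped Classical in
/-- A graph with `p` pendant vertices and `q` quasi-pendant vertices has `1` as a Laplacian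
eigenvalue with multiplicity at least `p - q`. -/
theorem count_one_lapSpectrum {V : Type*} [Fintype V] (G : SimpleGraph V)
    [DecidableRel G.Adj] :
    ((Finset.univ.filter fun v => G.degree v = 1).card : ℤ) -
        (Finset.univ.filter fun v => ∃ u, G.Adj v u ∧ G.degree u = 1).card ≤
      ((lapSpectrum G).count 1 : ℤ) := by
  classical
  have h := myAux G
  unfold lapSpectrum
  convert h using 4
  congr!
end
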